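/- arXiv:2202.11659 — 2 statements merged into one kernel-verified Lean document; each statement's English description precedes it below -/
import Mathlib

section
/- Let X ∈ ℝ^{d×d} and let Y₀ ∈ ℝ^{d×d} be symmetric positive semidefinite such that Γ₀ := ∫₀^∞ exp(sX) Y₀ exp(sX)ᵀ ds converges. Suppose t > 0 is such that λ_min(Γ₀^{[t]}) > 0, where Γ₀^{[t]} := ∫₀^t exp(sX) Y₀ exp(sX)ᵀ ds. Then for every symmetric Y ∈ ℝ^{d×d}, the integral ∫₀^∞ exp(sX) Y exp(sX)ᵀ ds converges, and its operator norm is at most (t ‖Γ₀‖² / (λ_min(Γ₀) λ_min(Γ₀^{[t]}))) · ‖Y‖. -/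
open Matrix MeasureTheory

attribute [local instance] Matrix.normedAddCommGroup Matrix.normedSpace

/-- The ℓ²→ℓ² operator norm (largest singular value) of a real matrix. -/
noncomputable def opN {k l : Type*} [Fintype k] [Fintype l] [DecidableEq l]
    (M : Matrix k l ℝ) : ℝ :=
  ‖LinearMap.toContinuousLinearMap (Matrix.toEuclideanLin M)‖

/-- The smallest eigenvalue of a symmetric real matrix, as the infimum of the
Rayleigh quotient over the unit sphere. -/
noncomputable def lamMin {k : Type*} [Fintype k] (M : Matrix k k ℝ) : ℝ :=
  sInf {r : ℝ | ∃ v : k → ℝ, v ⬝ᵥ v = 1 ∧ r = v ⬝ᵥ M.mulVec v}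

section ContSection
attribute [-instance] Matrix.normedAddCommGroup Matrix.normedSpace
attribute [local instance] Matrix.linftyOpNormedRing Matrix.linftyOpNormedAlgebra
  Matrix.linftyOpNormedAddCommGroup

lemma stmt11_expCont {d : ℕ} (X : Matrix (Fin d) (Fin d) ℝ) :
    Continuous fun s : ℝ => NormedSpace.exp (s • X) :=
  NormedSpace.exp_continuous.comp (continuous_id.smul continuous_const)

lemma stmt11_expAdd {d : ℕ} (X : Matrix (Fin d) (Fin d) ℝ) (a b : ℝ) :
    NormedSpace.exp ((a + b) • X)
      = NormedSpace.exp (a • X) * NormedSpace.exp (b • X) := by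
  rw [add_smul]
  exact NormedSpace.exp_add_of_commute ((Commute.refl X).smul_left a |>.smul_right b)

end ContSection

section Helpers

variable {d : ℕ}

noncomputable def quadCLM (w v : Fin d → ℝ) : Matrix (Fin d) (Fin d) ℝ →L[ℝ] ℝ :=
  LinearMap.toContinuousLinearMap
  { toFun := fun M => w ⬝ᵥ M *ᵥ v
    map_add' := fun A B => by simp [Matrix.add_mulVec, dotProduct_add]
    map_smul' := fun c A => by simp [Matrix.smul_mulVec, dotProduct_smul] }

@[simp] lemma quadCLM_apply (w v : Fin d → ℝ) (M : Matrix (Fin d) (Fin d) ℝ) :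
    quadCLM w v M = w ⬝ᵥ M *ᵥ v := rfl

noncomputable def conjCLM (A B : Matrix (Fin d) (Fin d) ℝ) :
    Matrix (Fin d) (Fin d) ℝ →L[ℝ] Matrix (Fin d) (Fin d) ℝ :=
  LinearMap.toContinuousLinearMap
  { toFun := fun M => A * M * B
    map_add' := fun M N => by noncomm_ring
    map_smul' := fun c M => by simp [Matrix.mul_smul, Matrix.smul_mul] }

@[simp] lemma conjCLM_apply (A B M : Matrix (Fin d) (Fin d) ℝ) :
    conjCLM A B M = A * M * B := rfl

lemma stmt11_dot_conj (A M : Matrix (Fin d) (Fin d) ℝ) (w v : Fin d → ℝ) :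
    w ⬝ᵥ (A * M * Aᵀ) *ᵥ v = (Aᵀ *ᵥ w) ⬝ᵥ M *ᵥ (Aᵀ *ᵥ v) := by
  rw [← Matrix.mulVec_mulVec, ← Matrix.mulVec_mulVec, Matrix.dotProduct_mulVec w,
    ← Matrix.mulVec_transpose, Matrix.dotProduct_mulVec (Aᵀ *ᵥ w)]

lemma stmt11_norm_sq_eq_dot (u : Fin d → ℝ) :
    ‖(WithLp.equiv 2 (Fin d → ℝ)).symm u‖ ^ 2 = u ⬝ᵥ u := by
  rw [← real_inner_self_eq_norm_sq]
  simp [PiLp.inner_apply, dotProduct, RCLike.inner_apply, mul_comm]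
  rw [EuclideanSpace.norm_eq, Real.sq_sqrt (by positivity)]
  simp [sq]

lemma stmt11_toCLM_apply (M : Matrix (Fin d) (Fin d) ℝ) (v : Fin d → ℝ) :
    LinearMap.toContinuousLinearMap (Matrix.toEuclideanLin M)
      ((WithLp.equiv 2 (Fin d → ℝ)).symm v) = (WithLp.equiv 2 (Fin d → ℝ)).symm (M *ᵥ v) := by
  simp [Matrix.toEuclideanLin_apply]

lemma stmt11_dot_self_nonneg (v : Fin d → ℝ) : 0 ≤ v ⬝ᵥ v :=
  Finset.sum_nonneg fun _ _ => mul_self_nonneg _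

lemma stmt11_opN_nonneg (M : Matrix (Fin d) (Fin d) ℝ) : 0 ≤ opN M := norm_nonneg _

lemma stmt11_mulVec_dot_le (M : Matrix (Fin d) (Fin d) ℝ) (v : Fin d → ℝ) :
    (M *ᵥ v) ⬝ᵥ (M *ᵥ v) ≤ opN M ^ 2 * (v ⬝ᵥ v) := by
  rw [← stmt11_norm_sq_eq_dot, ← stmt11_norm_sq_eq_dot, ← stmt11_toCLM_apply]
  calc ‖LinearMap.toContinuousLinearMap (Matrix.toEuclideanLin M)
        ((WithLp.equiv 2 (Fin d → ℝ)).symm v)‖ ^ 2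
      ≤ (opN M * ‖(WithLp.equiv 2 (Fin d → ℝ)).symm v‖) ^ 2 := by
        apply pow_le_pow_left₀ (norm_nonneg _)
        exact ContinuousLinearMap.le_opNorm _ _
    _ = opN M ^ 2 * ‖(WithLp.equiv 2 (Fin d → ℝ)).symm v‖ ^ 2 := by ring

lemma stmt11_dot_sq_le (u w : Fin d → ℝ) : (u ⬝ᵥ w) ^ 2 ≤ (u ⬝ᵥ u) * (w ⬝ᵥ w) := by
  simpa [dotProduct, pow_two, mul_pow] using Finset.sum_mul_sq_le_sq_mul_sq Finset.univ u w

/-- Bilinear Cauchy–Schwarz through the operator norm. -/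
lemma stmt11_bil_abs (M : Matrix (Fin d) (Fin d) ℝ) (w u : Fin d → ℝ) :
    |w ⬝ᵥ M *ᵥ u| ≤ opN M * Real.sqrt (w ⬝ᵥ w) * Real.sqrt (u ⬝ᵥ u) := by
  have h1 := stmt11_dot_sq_le w (M *ᵥ u)
  have h2 := stmt11_mulVec_dot_le M u
  have hww := stmt11_dot_self_nonneg w
  have huu := stmt11_dot_self_nonneg u
  have hM := stmt11_opN_nonneg M
  have hsq : (w ⬝ᵥ M *ᵥ u) ^ 2 ≤ (opN M * Real.sqrt (w ⬝ᵥ w) * Real.sqrt (u ⬝ᵥ u)) ^ 2 := by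
    have e1 : Real.sqrt (w ⬝ᵥ w) ^ 2 = w ⬝ᵥ w := Real.sq_sqrt hww
    have e2 : Real.sqrt (u ⬝ᵥ u) ^ 2 = u ⬝ᵥ u := Real.sq_sqrt huu
    calc (w ⬝ᵥ M *ᵥ u) ^ 2 ≤ (w ⬝ᵥ w) * ((M *ᵥ u) ⬝ᵥ (M *ᵥ u)) := h1
      _ ≤ (w ⬝ᵥ w) * (opN M ^ 2 * (u ⬝ᵥ u)) := by
          exact mul_le_mul_of_nonneg_left h2 hww
      _ = (opN M * Real.sqrt (w ⬝ᵥ w) * Real.sqrt (u ⬝ᵥ u)) ^ 2 := by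
          rw [mul_pow, mul_pow, e1, e2]; ring
  have hrhs : 0 ≤ opN M * Real.sqrt (w ⬝ᵥ w) * Real.sqrt (u ⬝ᵥ u) := by positivity
  nlinarith [sq_abs (w ⬝ᵥ M *ᵥ u), abs_nonneg (w ⬝ᵥ M *ᵥ u)]

lemma stmt11_quad_le_opN (M : Matrix (Fin d) (Fin d) ℝ) (u : Fin d → ℝ) :
    u ⬝ᵥ M *ᵥ u ≤ opN M * (u ⬝ᵥ u) := by
  have h := stmt11_bil_abs M u u
  have e : Real.sqrt (u ⬝ᵥ u) * Real.sqrt (u ⬝ᵥ u) = u ⬝ᵥ u :=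
    Real.mul_self_sqrt (stmt11_dot_self_nonneg u)
  calc u ⬝ᵥ M *ᵥ u ≤ |u ⬝ᵥ M *ᵥ u| := le_abs_self _
    _ ≤ opN M * Real.sqrt (u ⬝ᵥ u) * Real.sqrt (u ⬝ᵥ u) := h
    _ = opN M * (u ⬝ᵥ u) := by rw [mul_assoc, e]

lemma stmt11_opN_le_of_quad (M : Matrix (Fin d) (Fin d) ℝ) (C : ℝ) (hC : 0 ≤ C)
    (h : ∀ w v : Fin d → ℝ, w ⬝ᵥ M *ᵥ v ≤ C * Real.sqrt (w ⬝ᵥ w) * Real.sqrt (v ⬝ᵥ v)) :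
    opN M ≤ C := by
  apply ContinuousLinearMap.opNorm_le_bound _ hC
  intro x
  obtain ⟨v, rfl⟩ : ∃ v, (WithLp.equiv 2 (Fin d → ℝ)).symm v = x := ⟨WithLp.equiv 2 _ x, rfl⟩
  rw [stmt11_toCLM_apply]
  set u := M *ᵥ v with hu
  have h1 : ‖(WithLp.equiv 2 (Fin d → ℝ)).symm u‖ ^ 2 = u ⬝ᵥ M *ᵥ v := by
    rw [stmt11_norm_sq_eq_dot]
  have h2 := h u v
  have hnv : Real.sqrt (v ⬝ᵥ v) = ‖(WithLp.equiv 2 (Fin d → ℝ)).symm v‖ := by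
    rw [← stmt11_norm_sq_eq_dot, Real.sqrt_sq (norm_nonneg _)]
  have hnu : Real.sqrt (u ⬝ᵥ u) = ‖(WithLp.equiv 2 (Fin d → ℝ)).symm u‖ := by
    rw [← stmt11_norm_sq_eq_dot, Real.sqrt_sq (norm_nonneg _)]
  rw [hnv, hnu] at h2
  set nu := ‖(WithLp.equiv 2 (Fin d → ℝ)).symm u‖ with hnu'
  set nv := ‖(WithLp.equiv 2 (Fin d → ℝ)).symm v‖ with hnv'
  rcases (norm_nonneg ((WithLp.equiv 2 (Fin d → ℝ)).symm u)).eq_or_lt with h0 | h0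
  · rw [show nu = 0 from h0.symm]
    exact mul_nonneg hC (norm_nonneg _)
  · have : nu * nu ≤ (C * nv) * nu := by nlinarith [h1, h2]
    exact le_of_mul_le_mul_right this h0

lemma stmt11_lamMin_mul_le_quad (M : Matrix (Fin d) (Fin d) ℝ)
    (h0 : ∀ w : Fin d → ℝ, 0 ≤ w ⬝ᵥ M *ᵥ w) (u : Fin d → ℝ) :
    lamMin M * (u ⬝ᵥ u) ≤ u ⬝ᵥ M *ᵥ u := by
  have hbdd : BddBelow {r : ℝ | ∃ v : Fin d → ℝ, v ⬝ᵥ v = 1 ∧ r = v ⬝ᵥ M.mulVec v} :=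
    ⟨0, fun r ⟨v, _, hr⟩ => hr ▸ h0 v⟩
  rcases eq_or_ne u 0 with rfl | hu
  · simp
  · have hc : 0 < u ⬝ᵥ u :=
      (stmt11_dot_self_nonneg u).lt_of_ne'
        (by simpa [dotProduct_self_eq_zero] using hu)
    set c := u ⬝ᵥ u
    set v := (Real.sqrt c)⁻¹ • u with hv
    have hvv : v ⬝ᵥ v = 1 := by
      rw [hv, smul_dotProduct, dotProduct_smul, smul_eq_mul, smul_eq_mul]
      have hsq : Real.sqrt c ^ 2 = c := Real.sq_sqrt hc.le
      field_simp
      exact hsq.symm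
    have hmem : v ⬝ᵥ M *ᵥ v ∈ {r : ℝ | ∃ v : Fin d → ℝ, v ⬝ᵥ v = 1 ∧ r = v ⬝ᵥ M.mulVec v} :=
      ⟨v, hvv, rfl⟩
    have hle := csInf_le hbdd hmem
    have ha : (Real.sqrt c)⁻¹ * (Real.sqrt c)⁻¹ = c⁻¹ := by
      rw [← mul_inv, Real.mul_self_sqrt hc.le]
    have hquad : v ⬝ᵥ M *ᵥ v = c⁻¹ * (u ⬝ᵥ M *ᵥ u) := by
      rw [hv, smul_dotProduct, Matrix.mulVec_smul, dotProduct_smul,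
        smul_eq_mul, smul_eq_mul, ← mul_assoc, ha]
    rw [hquad] at hle
    calc lamMin M * c ≤ (c⁻¹ * (u ⬝ᵥ M *ᵥ u)) * c := mul_le_mul_of_nonneg_right hle hc.le
      _ = u ⬝ᵥ M *ᵥ u := by field_simp

lemma stmt11_le_lamMin (M : Matrix (Fin d) (Fin d) ℝ) (b : ℝ) (hd : 0 < d)
    (h : ∀ v : Fin d → ℝ, v ⬝ᵥ v = 1 → b ≤ v ⬝ᵥ M *ᵥ v) : b ≤ lamMin M := by
  apply le_csInf
  · refine ⟨(Pi.single ⟨0, hd⟩ 1 : Fin d → ℝ) ⬝ᵥ M *ᵥ Pi.single ⟨0, hd⟩ 1,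
      Pi.single ⟨0, hd⟩ 1, ?_, rfl⟩
    simp [dotProduct, Pi.single_apply]
  · rintro r ⟨v, hv, rfl⟩
    exact h v hv

lemma stmt11_lamMin_zero_dim (hd : d = 0) (M : Matrix (Fin d) (Fin d) ℝ) : lamMin M = 0 := by
  subst hd
  have : {r : ℝ | ∃ v : Fin 0 → ℝ, v ⬝ᵥ v = 1 ∧ r = v ⬝ᵥ M.mulVec v} = ∅ := by
    ext r; simp [dotProduct]
  rw [lamMin, this, Real.sInf_empty]

lemma stmt11_entry_eq (M : Matrix (Fin d) (Fin d) ℝ) (i j : Fin d) :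
    M i j = Pi.single i 1 ⬝ᵥ M *ᵥ Pi.single j 1 := by
  simp [Matrix.mulVec_single, dotProduct, Pi.single_apply]

end Helpers

section Shift

variable {F : Type*} [NormedAddCommGroup F] [NormedSpace ℝ F]

lemma stmt11_shift_setIntegral (f : ℝ → F) (c : ℝ) (s : Set ℝ) :
    ∫ x in (fun x => x + c) ⁻¹' s, f (x + c) = ∫ x in s, f x := by
  have A : MeasurableEmbedding fun x : ℝ => x + c :=
    (Homeomorph.addRight c).isClosedEmbedding.measurableEmbedding
  rw [← A.setIntegral_map, map_add_right_eq_self volume c]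

end Shift

set_option maxHeartbeats 2000000 in
/-- Per-vector energy bound: the squared Euclidean norm of `exp(sX)ᵀ v` is integrable
on `(0,∞)` with integral at most `(t ‖Γ₀‖²/(λ_min Γ₀ λ_min Γ₀ᵗ)) ‖v‖²`. -/
lemma stmt11_main {d : ℕ} (X Y₀ : Matrix (Fin d) (Fin d) ℝ)
    (hd : 0 < d)
    (hY₀ : Y₀.PosSemidef)
    (hint : @IntegrableOn ℝ (Matrix (Fin d) (Fin d) ℝ) _ _ SeminormedAddGroup.toContinuousENorm
      (fun s : ℝ => NormedSpace.exp (s • X) * Y₀ * (NormedSpace.exp (s • X))ᵀ)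
      (Set.Ioi 0) volume)
    (Γ₀ : Matrix (Fin d) (Fin d) ℝ)
    (hΓ₀ : Γ₀ = ∫ s in Set.Ioi (0:ℝ),
      NormedSpace.exp (s • X) * Y₀ * (NormedSpace.exp (s • X))ᵀ)
    (t : ℝ) (ht : 0 < t)
    (Γ₀t : Matrix (Fin d) (Fin d) ℝ)
    (hΓ₀t : Γ₀t = ∫ s in Set.Ioc (0:ℝ) t,
      NormedSpace.exp (s • X) * Y₀ * (NormedSpace.exp (s • X))ᵀ)
    (hpos : 0 < lamMin Γ₀t) (v : Fin d → ℝ) :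
    IntegrableOn
      (fun s : ℝ => ((NormedSpace.exp (s • X))ᵀ *ᵥ v) ⬝ᵥ ((NormedSpace.exp (s • X))ᵀ *ᵥ v))
      (Set.Ioi 0) ∧
    (∫ s in Set.Ioi (0:ℝ),
        ((NormedSpace.exp (s • X))ᵀ *ᵥ v) ⬝ᵥ ((NormedSpace.exp (s • X))ᵀ *ᵥ v)) ≤
      t * opN Γ₀ ^ 2 / (lamMin Γ₀ * lamMin Γ₀t) * (v ⬝ᵥ v) := by
  classical
  set E : ℝ → Matrix (Fin d) (Fin d) ℝ := fun s => NormedSpace.exp (s • X) with hE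
  set f : ℝ → Matrix (Fin d) (Fin d) ℝ := fun s => E s * Y₀ * (E s)ᵀ with hf
  have hf_int : @IntegrableOn ℝ (Matrix (Fin d) (Fin d) ℝ) _ _ SeminormedAddGroup.toContinuousENorm f (Set.Ioi 0) volume := hint
  have hE0 : E 0 = 1 := by rw [hE]; simp
  have hEcont : Continuous E := stmt11_expCont X
  have hconj : ∀ τ s : ℝ, f (s + τ) = E τ * f s * (E τ)ᵀ := by
    intro τ s
    have h1 : E (s + τ) = E τ * E s := by rw [add_comm, hE]; exact stmt11_expAdd X τ s
    rw [hf]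
    simp only [h1, Matrix.transpose_mul]
    noncomm_ring
  have key1 : ∀ τ : ℝ, 0 ≤ τ → (∫ s in Set.Ioi τ, f s) = E τ * Γ₀ * (E τ)ᵀ := by
    intro τ hτ
    have hpre : (fun x : ℝ => x + τ) ⁻¹' Set.Ioi τ = Set.Ioi 0 := by ext x; simp
    have h1 : (∫ s in Set.Ioi τ, f s) = ∫ s in Set.Ioi 0, f (s + τ) := by
      rw [← stmt11_shift_setIntegral f τ (Set.Ioi τ), hpre]
    rw [h1]
    calc (∫ s in Set.Ioi 0, f (s + τ))
        = ∫ s in Set.Ioi 0, conjCLM (E τ) (E τ)ᵀ (f s) := by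
          refine setIntegral_congr_fun measurableSet_Ioi fun s _ => ?_
          rw [conjCLM_apply, hconj]
      _ = conjCLM (E τ) (E τ)ᵀ (∫ s in Set.Ioi 0, f s) :=
          ContinuousLinearMap.integral_comp_comm (conjCLM (E τ) (E τ)ᵀ) hf_int
      _ = E τ * Γ₀ * (E τ)ᵀ := by rw [conjCLM_apply, ← hΓ₀]
  have key2 : ∀ τ : ℝ, 0 ≤ τ → (∫ s in Set.Ioc τ (τ + t), f s) = E τ * Γ₀t * (E τ)ᵀ := by
    intro τ hτ
    have hpre : (fun x : ℝ => x + τ) ⁻¹' Set.Ioc τ (τ + t) = Set.Ioc 0 t := by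
      ext x
      simp only [Set.mem_preimage, Set.mem_Ioc]
      constructor
      · rintro ⟨h1, h2⟩; exact ⟨by linarith, by linarith⟩
      · rintro ⟨h1, h2⟩; exact ⟨by linarith, by linarith⟩
    have h1 : (∫ s in Set.Ioc τ (τ + t), f s) = ∫ s in Set.Ioc 0 t, f (s + τ) := by
      rw [← stmt11_shift_setIntegral f τ (Set.Ioc τ (τ + t)), hpre]
    have hIoct : @IntegrableOn ℝ (Matrix (Fin d) (Fin d) ℝ) _ _ SeminormedAddGroup.toContinuousENorm f (Set.Ioc 0 t) volume := hf_int.mono_set Set.Ioc_subset_Ioi_self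
    rw [h1]
    calc (∫ s in Set.Ioc 0 t, f (s + τ))
        = ∫ s in Set.Ioc 0 t, conjCLM (E τ) (E τ)ᵀ (f s) := by
          refine setIntegral_congr_fun measurableSet_Ioc fun s _ => ?_
          rw [conjCLM_apply, hconj]
      _ = conjCLM (E τ) (E τ)ᵀ (∫ s in Set.Ioc 0 t, f s) :=
          ContinuousLinearMap.integral_comp_comm (conjCLM (E τ) (E τ)ᵀ) hIoct
      _ = E τ * Γ₀t * (E τ)ᵀ := by rw [conjCLM_apply, ← hΓ₀t]
  set m := lamMin Γ₀t with hm
  set L := lamMin Γ₀ with hL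
  set R := opN Γ₀ with hR
  have hq_nonneg : ∀ (u : Fin d → ℝ) (s : ℝ), 0 ≤ u ⬝ᵥ f s *ᵥ u := by
    intro u s
    have h := (hY₀.mul_mul_conjTranspose_same (E s)).dotProduct_mulVec_nonneg u
    simpa [hf] using h
  have hq_int : ∀ u : Fin d → ℝ, IntegrableOn (fun s => u ⬝ᵥ f s *ᵥ u) (Set.Ioi 0) := by
    intro u
    exact (quadCLM u u).integrable_comp hf_int
  have hΓ₀quad : ∀ u : Fin d → ℝ, u ⬝ᵥ Γ₀ *ᵥ u = ∫ s in Set.Ioi 0, u ⬝ᵥ f s *ᵥ u := by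
    intro u
    have h := ContinuousLinearMap.integral_comp_comm (quadCLM u u) hf_int
    rw [hΓ₀]
    exact h.symm
  have hΓ₀tquad : ∀ u : Fin d → ℝ, u ⬝ᵥ Γ₀t *ᵥ u = ∫ s in Set.Ioc 0 t, u ⬝ᵥ f s *ᵥ u := by
    intro u
    have h := ContinuousLinearMap.integral_comp_comm (quadCLM u u)
      (hf_int.mono_set (Set.Ioc_subset_Ioi_self (a := t) (b := (0:ℝ))))
    rw [hΓ₀t]
    exact h.symm
  have hΓ₀psd : ∀ u : Fin d → ℝ, 0 ≤ u ⬝ᵥ Γ₀ *ᵥ u := fun u => by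
    rw [hΓ₀quad]
    exact setIntegral_nonneg measurableSet_Ioi fun s _ => hq_nonneg u s
  have hΓ₀tpsd : ∀ u : Fin d → ℝ, 0 ≤ u ⬝ᵥ Γ₀t *ᵥ u := fun u => by
    rw [hΓ₀tquad]
    exact setIntegral_nonneg measurableSet_Ioc fun s _ => hq_nonneg u s
  have hΓ₀t_le : ∀ u : Fin d → ℝ, u ⬝ᵥ Γ₀t *ᵥ u ≤ u ⬝ᵥ Γ₀ *ᵥ u := by
    intro u
    rw [hΓ₀quad, hΓ₀tquad]
    exact setIntegral_mono_set (hq_int u) (ae_of_all _ fun s => hq_nonneg u s)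
      (HasSubset.Subset.eventuallyLE Set.Ioc_subset_Ioi_self)
  have hm0 : 0 < m := hpos
  have hmL : m ≤ L := by
    apply stmt11_le_lamMin Γ₀ m hd
    intro u hu
    have h1 := stmt11_lamMin_mul_le_quad Γ₀t hΓ₀tpsd u
    rw [hu, mul_one] at h1
    exact h1.trans (hΓ₀t_le u)
  have hL0 : 0 < L := lt_of_lt_of_le hm0 hmL
  have hmR : m ≤ R := by
    set e : Fin d → ℝ := Pi.single ⟨0, hd⟩ 1 with he
    have hee : e ⬝ᵥ e = 1 := by rw [he]; simp [dotProduct, Pi.single_apply]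
    have h1 := stmt11_lamMin_mul_le_quad Γ₀t hΓ₀tpsd e
    have h2 := (hΓ₀t_le e).trans (stmt11_quad_le_opN Γ₀ e)
    rw [hee, mul_one] at h1 h2
    exact h1.trans h2
  have hR0 : 0 < R := lt_of_lt_of_le hm0 hmR
  set qr : ℝ := 1 - m / R with hqr
  have hqr0 : 0 ≤ qr := by
    rw [hqr]
    have : m / R ≤ 1 := (div_le_one hR0).2 hmR
    linarith
  -- per-vector objects
  have hw0 : (E 0)ᵀ *ᵥ v = v := by rw [hE0]; simp
  have hFI : ∀ τ : ℝ, 0 ≤ τ →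
      ((E τ)ᵀ *ᵥ v) ⬝ᵥ Γ₀ *ᵥ ((E τ)ᵀ *ᵥ v) = ∫ s in Set.Ioi τ, v ⬝ᵥ f s *ᵥ v := by
    intro τ hτ
    rw [← stmt11_dot_conj, ← key1 τ hτ]
    have h := ContinuousLinearMap.integral_comp_comm (quadCLM v v)
      (hf_int.mono_set (Set.Ioi_subset_Ioi hτ))
    exact h.symm
  have hGI : ∀ τ : ℝ, 0 ≤ τ →
      ((E τ)ᵀ *ᵥ v) ⬝ᵥ Γ₀t *ᵥ ((E τ)ᵀ *ᵥ v) = ∫ s in Set.Ioc τ (τ + t), v ⬝ᵥ f s *ᵥ v := by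
    intro τ hτ
    rw [← stmt11_dot_conj, ← key2 τ hτ]
    have hsub : Set.Ioc τ (τ + t) ⊆ Set.Ioi 0 := fun x hx => lt_of_le_of_lt hτ hx.1
    have h := ContinuousLinearMap.integral_comp_comm (quadCLM v v) (hf_int.mono_set hsub)
    exact h.symm
  have hsplit : ∀ a b : ℝ, 0 ≤ a → a ≤ b →
      (∫ s in Set.Ioi a, v ⬝ᵥ f s *ᵥ v)
        = (∫ s in Set.Ioc a b, v ⬝ᵥ f s *ᵥ v) + ∫ s in Set.Ioi b, v ⬝ᵥ f s *ᵥ v := by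
    intro a b ha hab
    have hsub1 : Set.Ioc a b ⊆ Set.Ioi 0 := fun x hx => lt_of_le_of_lt ha hx.1
    have hsub2 : Set.Ioi b ⊆ Set.Ioi 0 := Set.Ioi_subset_Ioi (ha.trans hab)
    rw [← Set.Ioc_union_Ioi_eq_Ioi hab,
      setIntegral_union (Set.Ioc_disjoint_Ioi le_rfl) measurableSet_Ioi
        ((hq_int v).mono_set hsub1) ((hq_int v).mono_set hsub2)]
  set F : ℝ → ℝ := fun τ => ((E τ)ᵀ *ᵥ v) ⬝ᵥ Γ₀ *ᵥ ((E τ)ᵀ *ᵥ v) with hF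
  set n : ℝ → ℝ := fun τ => ((E τ)ᵀ *ᵥ v) ⬝ᵥ ((E τ)ᵀ *ᵥ v) with hn
  have hF_anti : ∀ a b : ℝ, 0 ≤ a → a ≤ b → F b ≤ F a := by
    intro a b ha hab
    rw [hF]
    simp only []
    rw [hFI a ha, hFI b (ha.trans hab), hsplit a b ha hab]
    have h0 : 0 ≤ ∫ s in Set.Ioc a b, v ⬝ᵥ f s *ᵥ v :=
      setIntegral_nonneg measurableSet_Ioc fun s _ => hq_nonneg v s
    linarith
  have hstep : ∀ τ : ℝ, 0 ≤ τ → F (τ + t) ≤ qr * F τ := by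
    intro τ hτ
    have hFG : F τ = (((E τ)ᵀ *ᵥ v) ⬝ᵥ Γ₀t *ᵥ ((E τ)ᵀ *ᵥ v)) + F (τ + t) := by
      rw [hF]
      simp only []
      rw [hFI τ hτ, hGI τ hτ, hFI (τ + t) (by linarith), hsplit τ (τ + t) hτ (by linarith)]
    have h1 : m * n τ ≤ ((E τ)ᵀ *ᵥ v) ⬝ᵥ Γ₀t *ᵥ ((E τ)ᵀ *ᵥ v) :=
      stmt11_lamMin_mul_le_quad Γ₀t hΓ₀tpsd _
    have h2 : F τ ≤ R * n τ := stmt11_quad_le_opN Γ₀ _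
    have hkey : R * F (τ + t) ≤ (R - m) * F τ := by nlinarith [hm0.le]
    have hq_eq : qr * F τ = ((R - m) * F τ) / R := by
      rw [hqr]; field_simp; try ring
    rw [hq_eq, le_div_iff₀ hR0]
    linarith [hkey]
  have hF0_le : F 0 ≤ R * (v ⬝ᵥ v) := by
    rw [hF]; simp only [hw0]; exact stmt11_quad_le_opN Γ₀ v
  have hF0_nn : 0 ≤ F 0 := by
    rw [hF]; simp only [hw0]; exact hΓ₀psd v
  have hFk : ∀ k : ℕ, F ((k : ℝ) * t) ≤ qr ^ k * F 0 := by
    intro k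
    induction k with
    | zero => simp
    | succ k ih =>
      have hkt : (0:ℝ) ≤ (k : ℝ) * t := by positivity
      have hcast : (((k + 1 : ℕ)) : ℝ) * t = (k : ℝ) * t + t := by push_cast; ring
      rw [hcast]
      calc F ((k : ℝ) * t + t) ≤ qr * F ((k : ℝ) * t) := hstep _ hkt
        _ ≤ qr * (qr ^ k * F 0) := mul_le_mul_of_nonneg_left ih hqr0
        _ = qr ^ (k + 1) * F 0 := by ring
  have hn_nn : ∀ s : ℝ, 0 ≤ n s := fun s => stmt11_dot_self_nonneg _
  have hLn : ∀ s : ℝ, L * n s ≤ F s := fun s => stmt11_lamMin_mul_le_quad Γ₀ hΓ₀psd _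
  have hpt : ∀ (k : ℕ) (s : ℝ), s ∈ Set.Ioc ((k:ℝ) * t) (((k:ℝ) + 1) * t) →
      n s ≤ qr ^ k * F 0 / L := by
    intro k s hs
    have hkt : (0:ℝ) ≤ (k : ℝ) * t := by positivity
    have h1 : F s ≤ F ((k:ℝ) * t) := hF_anti _ _ hkt hs.1.le
    have h2 := (hLn s).trans (h1.trans (hFk k))
    rw [le_div_iff₀ hL0]
    linarith [h2]
  have hn_cont : Continuous n := by
    have h1 : Continuous fun τ : ℝ => E τ * (E τ)ᵀ := hEcont.matrix_mul hEcont.matrix_transpose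
    have h2 : n = fun τ => quadCLM v v (E τ * (E τ)ᵀ) := by
      funext τ
      rw [hn]
      simp only [quadCLM_apply]
      have h3 : E τ * (E τ)ᵀ = E τ * 1 * (E τ)ᵀ := by rw [mul_one]
      rw [h3, stmt11_dot_conj]
      simp
    rw [h2]
    exact (quadCLM v v).continuous.comp h1
  have hnIoc : ∀ b : ℝ, IntegrableOn n (Set.Ioc 0 b) := fun b => hn_cont.integrableOn_Ioc
  set K : ℝ := t * R ^ 2 / (L * m) with hK
  set B : ℝ := K * (v ⬝ᵥ v) with hB
  have hB_nn : 0 ≤ B := by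
    rw [hB, hK]
    exact mul_nonneg (div_nonneg (mul_nonneg ht.le (sq_nonneg R))
      (mul_nonneg hL0.le hm0.le)) (stmt11_dot_self_nonneg v)
  have hblock : ∀ k : ℕ,
      (∫ s in Set.Ioc ((k:ℝ) * t) (((k:ℝ) + 1) * t), n s) ≤ t * (qr ^ k * F 0 / L) := by
    intro k
    have hle : (k:ℝ) * t ≤ ((k:ℝ) + 1) * t := by nlinarith [ht.le]
    have h1 : (∫ s in Set.Ioc ((k:ℝ) * t) (((k:ℝ) + 1) * t), n s)
        ≤ ∫ _ in Set.Ioc ((k:ℝ) * t) (((k:ℝ) + 1) * t), (qr ^ k * F 0 / L) :=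
      setIntegral_mono_on (hn_cont.integrableOn_Ioc)
        (integrableOn_const measure_Ioc_lt_top.ne) measurableSet_Ioc (hpt k)
    have h2 : (∫ _ in Set.Ioc ((k:ℝ) * t) (((k:ℝ) + 1) * t), (qr ^ k * F 0 / L))
        = t * (qr ^ k * F 0 / L) := by
      rw [setIntegral_const, Real.volume_real_Ioc_of_le hle,
        smul_eq_mul, show ((k:ℝ) + 1) * t - (k:ℝ) * t = t by ring]
    linarith [h1, h2.le, h2.ge]
  have hsumN : ∀ N : ℕ, (∫ s in Set.Ioc 0 ((N:ℝ) * t), n s)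
      = ∑ k ∈ Finset.range N, ∫ s in Set.Ioc ((k:ℝ) * t) (((k:ℝ) + 1) * t), n s := by
    intro N
    induction N with
    | zero => simp
    | succ N ih =>
      have h0N : (0:ℝ) ≤ (N:ℝ) * t := by positivity
      have hNN : (N:ℝ) * t ≤ ((N:ℝ) + 1) * t := by nlinarith [ht.le]
      have hu : Set.Ioc (0:ℝ) ((N:ℝ) * t) ∪ Set.Ioc ((N:ℝ) * t) (((N:ℝ) + 1) * t)
          = Set.Ioc 0 (((N:ℝ) + 1) * t) := Set.Ioc_union_Ioc_eq_Ioc h0N hNN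
      have hcast : ((N + 1 : ℕ) : ℝ) = (N:ℝ) + 1 := by push_cast; ring
      rw [hcast, ← hu,
        setIntegral_union (Set.Ioc_disjoint_Ioc_of_le le_rfl) measurableSet_Ioc (hnIoc _)
          hn_cont.integrableOn_Ioc,
        ih, Finset.sum_range_succ]
  have hgeom : ∀ N : ℕ, (∑ k ∈ Finset.range N, qr ^ k) ≤ R / m := by
    intro N
    have hgm : (∑ k ∈ Finset.range N, qr ^ k) * (1 - qr) = 1 - qr ^ N := by
      linear_combination -(geom_sum_mul qr N)
    have h1mqr : 1 - qr = m / R := by rw [hqr]; ring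
    rw [h1mqr] at hgm
    have hqrN : 0 ≤ qr ^ N := pow_nonneg hqr0 N
    rw [le_div_iff₀ hm0]
    have h2 : (∑ k ∈ Finset.range N, qr ^ k) * (m / R) ≤ 1 := by rw [hgm]; linarith
    calc (∑ k ∈ Finset.range N, qr ^ k) * m
        = ((∑ k ∈ Finset.range N, qr ^ k) * (m / R)) * R := by field_simp
      _ ≤ 1 * R := mul_le_mul_of_nonneg_right h2 hR0.le
      _ = R := one_mul R
  have hsum_le : ∀ N : ℕ,
      (∑ k ∈ Finset.range N, ∫ s in Set.Ioc ((k:ℝ) * t) (((k:ℝ) + 1) * t), n s) ≤ B := by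
    intro N
    have hc1 : ∀ k ∈ Finset.range N,
        (∫ s in Set.Ioc ((k:ℝ) * t) (((k:ℝ) + 1) * t), n s) ≤ (t * F 0 / L) * qr ^ k := by
      intro k _
      refine (hblock k).trans_eq ?_
      field_simp
    calc (∑ k ∈ Finset.range N, ∫ s in Set.Ioc ((k:ℝ) * t) (((k:ℝ) + 1) * t), n s)
        ≤ ∑ k ∈ Finset.range N, (t * F 0 / L) * qr ^ k := Finset.sum_le_sum hc1
      _ = (t * F 0 / L) * ∑ k ∈ Finset.range N, qr ^ k := by rw [Finset.mul_sum]
      _ ≤ (t * F 0 / L) * (R / m) := by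
          refine mul_le_mul_of_nonneg_left (hgeom N) ?_
          exact div_nonneg (mul_nonneg ht.le hF0_nn) hL0.le
      _ = (t * F 0 * R) / (L * m) := by
          rw [div_mul_div_comm]
      _ ≤ B := by
          rw [hB, hK, div_mul_eq_mul_div]
          have hnum : t * F 0 * R ≤ t * R ^ 2 * (v ⬝ᵥ v) := by
            have h3 := mul_le_mul_of_nonneg_left hF0_le (mul_nonneg ht.le hR0.le)
            nlinarith [h3]
          exact (div_le_div_iff_of_pos_right (mul_pos hL0 hm0)).2 hnum
  have hIb : ∀ b : ℝ, (∫ s in Set.Ioc 0 b, n s) ≤ B := by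
    intro b
    rcases le_or_gt b 0 with hb | hb
    · rw [Set.Ioc_eq_empty (by exact fun h => absurd hb (not_le.2 (lt_of_lt_of_le h le_rfl)))]
      · simpa using hB_nn
    · set N := ⌈b / t⌉₊ with hN
      have hbN : b ≤ (N:ℝ) * t := by
        have h1 : b / t ≤ (N:ℝ) := Nat.le_ceil _
        calc b = (b / t) * t := by field_simp
          _ ≤ (N:ℝ) * t := mul_le_mul_of_nonneg_right h1 ht.le
      have hsub : Set.Ioc 0 b ⊆ Set.Ioc 0 ((N:ℝ) * t) := Set.Ioc_subset_Ioc_right hbN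
      have h1 : (∫ s in Set.Ioc 0 b, n s) ≤ ∫ s in Set.Ioc 0 ((N:ℝ) * t), n s :=
        setIntegral_mono_set (hnIoc _) (ae_of_all _ hn_nn) (HasSubset.Subset.eventuallyLE hsub)
      exact h1.trans ((hsumN N) ▸ hsum_le N)
  have hn_int : IntegrableOn n (Set.Ioi 0) := by
    apply integrableOn_Ioi_of_intervalIntegral_norm_bounded B 0 (fun i : ℝ => hnIoc i) Filter.tendsto_id
    filter_upwards [Filter.eventually_ge_atTop (0:ℝ)] with b hb
    rw [intervalIntegral.integral_of_le hb,
      setIntegral_congr_fun measurableSet_Ioc (fun s _ => Real.norm_of_nonneg (hn_nn s))]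
    exact hIb b
  have hn_val : (∫ s in Set.Ioi 0, n s) ≤ B := by
    apply le_of_tendsto (intervalIntegral_tendsto_integral_Ioi 0 hn_int Filter.tendsto_id)
    filter_upwards [Filter.eventually_ge_atTop (0:ℝ)] with b hb
    simp only [id_eq]
    rw [intervalIntegral.integral_of_le hb]
    exact hIb b
  exact ⟨hn_int, hn_val⟩

/-- If `Γ₀ = ∫₀^∞ exp(sX) Y₀ exp(sX)ᵀ ds` converges for some PSD `Y₀`
and the finite-time Gramian `Γ₀^{[t]}` has positive smallest eigenvalue, then for every
symmetric `Y` the Lyapunov integral converges with operator norm at most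
`(t ‖Γ₀‖²/(λ_min(Γ₀) λ_min(Γ₀^{[t]}))) ‖Y‖`. -/
theorem stmt_11 {d : ℕ} (X Y₀ : Matrix (Fin d) (Fin d) ℝ)
    (hY₀ : Y₀.PosSemidef)
    (hint : @IntegrableOn ℝ (Matrix (Fin d) (Fin d) ℝ) _ _ SeminormedAddGroup.toContinuousENorm
      (fun s : ℝ => NormedSpace.exp (s • X) * Y₀ * (NormedSpace.exp (s • X))ᵀ)
      (Set.Ioi 0) volume)
    (Γ₀ : Matrix (Fin d) (Fin d) ℝ)
    (hΓ₀ : Γ₀ = ∫ s in Set.Ioi (0:ℝ),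
      NormedSpace.exp (s • X) * Y₀ * (NormedSpace.exp (s • X))ᵀ)
    (t : ℝ) (ht : 0 < t)
    (Γ₀t : Matrix (Fin d) (Fin d) ℝ)
    (hΓ₀t : Γ₀t = ∫ s in Set.Ioc (0:ℝ) t,
      NormedSpace.exp (s • X) * Y₀ * (NormedSpace.exp (s • X))ᵀ)
    (hpos : 0 < lamMin Γ₀t) :
    ∀ Y : Matrix (Fin d) (Fin d) ℝ, Y.IsSymm →
      @IntegrableOn ℝ (Matrix (Fin d) (Fin d) ℝ) _ _ SeminormedAddGroup.toContinuousENorm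
        (fun s : ℝ => NormedSpace.exp (s • X) * Y * (NormedSpace.exp (s • X))ᵀ)
        (Set.Ioi 0) volume ∧
      opN (∫ s in Set.Ioi (0:ℝ),
          NormedSpace.exp (s • X) * Y * (NormedSpace.exp (s • X))ᵀ) ≤
        t * opN Γ₀ ^ 2 / (lamMin Γ₀ * lamMin Γ₀t) * opN Y := by
  intro Y _
  rcases Nat.eq_zero_or_pos d with hd | hd
  · rw [stmt11_lamMin_zero_dim hd] at hpos
    exact absurd hpos (lt_irrefl 0)
  set E : ℝ → Matrix (Fin d) (Fin d) ℝ := fun s => NormedSpace.exp (s • X) with hE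
  have hEcont : Continuous E := stmt11_expCont X
  set K : ℝ := t * opN Γ₀ ^ 2 / (lamMin Γ₀ * lamMin Γ₀t) with hK
  have big : ∀ v : Fin d → ℝ,
      IntegrableOn (fun s : ℝ => ((E s)ᵀ *ᵥ v) ⬝ᵥ ((E s)ᵀ *ᵥ v)) (Set.Ioi 0) ∧
      (∫ s in Set.Ioi (0:ℝ), ((E s)ᵀ *ᵥ v) ⬝ᵥ ((E s)ᵀ *ᵥ v)) ≤ K * (v ⬝ᵥ v) :=
    fun v => stmt11_main X Y₀ hd hY₀ hint Γ₀ hΓ₀ t ht Γ₀t hΓ₀t hpos v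
  have hg_cont : Continuous fun s : ℝ => E s * Y * (E s)ᵀ :=
    (hEcont.matrix_mul continuous_const).matrix_mul hEcont.matrix_transpose
  set D : ℝ → ℝ :=
    fun s => ∑ i : Fin d, ((E s)ᵀ *ᵥ Pi.single i 1) ⬝ᵥ ((E s)ᵀ *ᵥ Pi.single i 1) with hD
  have hD_int : IntegrableOn D (Set.Ioi 0) :=
    integrable_finset_sum _ fun i _ => (big (Pi.single i 1)).1
  have hterm_le_D : ∀ (s : ℝ) (i : Fin d),
      ((E s)ᵀ *ᵥ Pi.single i 1) ⬝ᵥ ((E s)ᵀ *ᵥ Pi.single i 1) ≤ D s := by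
    intro s i
    simp only [hD]
    exact Finset.single_le_sum
      (f := fun j : Fin d => ((E s)ᵀ *ᵥ Pi.single j 1) ⬝ᵥ ((E s)ᵀ *ᵥ Pi.single j 1))
      (fun j _ => stmt11_dot_self_nonneg _) (Finset.mem_univ i)
  have hD_nn : ∀ s : ℝ, 0 ≤ D s := by
    intro s
    simp only [hD]
    exact Finset.sum_nonneg fun i _ => stmt11_dot_self_nonneg _
  have hsqrt_amgm : ∀ x y : ℝ, 0 ≤ x → 0 ≤ y →
      Real.sqrt x * Real.sqrt y ≤ (x + y) / 2 := by
    intro x y hx hy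
    nlinarith [sq_nonneg (Real.sqrt x - Real.sqrt y), Real.sq_sqrt hx, Real.sq_sqrt hy,
      Real.sqrt_nonneg x, Real.sqrt_nonneg y]
  have hgnorm : ∀ s : ℝ, ‖E s * Y * (E s)ᵀ‖ ≤ opN Y * D s := by
    intro s
    rw [Matrix.norm_le_iff (mul_nonneg (stmt11_opN_nonneg Y) (hD_nn s))]
    intro i j
    have h1 : (E s * Y * (E s)ᵀ) i j
        = ((E s)ᵀ *ᵥ Pi.single i 1) ⬝ᵥ Y *ᵥ ((E s)ᵀ *ᵥ Pi.single j 1) := by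
      rw [stmt11_entry_eq (E s * Y * (E s)ᵀ) i j, stmt11_dot_conj]
    rw [Real.norm_eq_abs, h1]
    have hAi := stmt11_dot_self_nonneg ((E s)ᵀ *ᵥ (Pi.single i 1 : Fin d → ℝ))
    have hAj := stmt11_dot_self_nonneg ((E s)ᵀ *ᵥ (Pi.single j 1 : Fin d → ℝ))
    calc |((E s)ᵀ *ᵥ Pi.single i 1) ⬝ᵥ Y *ᵥ ((E s)ᵀ *ᵥ Pi.single j 1)|
        ≤ opN Y * Real.sqrt (((E s)ᵀ *ᵥ Pi.single i 1) ⬝ᵥ ((E s)ᵀ *ᵥ Pi.single i 1))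
            * Real.sqrt (((E s)ᵀ *ᵥ Pi.single j 1) ⬝ᵥ ((E s)ᵀ *ᵥ Pi.single j 1)) :=
          stmt11_bil_abs Y _ _
      _ = opN Y * (Real.sqrt (((E s)ᵀ *ᵥ Pi.single i 1) ⬝ᵥ ((E s)ᵀ *ᵥ Pi.single i 1))
            * Real.sqrt (((E s)ᵀ *ᵥ Pi.single j 1) ⬝ᵥ ((E s)ᵀ *ᵥ Pi.single j 1))) := by ring
      _ ≤ opN Y * ((((E s)ᵀ *ᵥ Pi.single i 1) ⬝ᵥ ((E s)ᵀ *ᵥ Pi.single i 1)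
            + ((E s)ᵀ *ᵥ Pi.single j 1) ⬝ᵥ ((E s)ᵀ *ᵥ Pi.single j 1)) / 2) :=
          mul_le_mul_of_nonneg_left (hsqrt_amgm _ _ hAi hAj) (stmt11_opN_nonneg Y)
      _ ≤ opN Y * D s := by
          refine mul_le_mul_of_nonneg_left ?_ (stmt11_opN_nonneg Y)
          have ha := hterm_le_D s i
          have hb := hterm_le_D s j
          linarith
  have hg_int : @IntegrableOn ℝ (Matrix (Fin d) (Fin d) ℝ) _ _ SeminormedAddGroup.toContinuousENorm (fun s : ℝ => E s * Y * (E s)ᵀ) (Set.Ioi 0) volume := by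
    refine Integrable.mono (hD_int.const_mul (opN Y)) (by haveI : TopologicalSpace.PseudoMetrizableSpace (Matrix (Fin d) (Fin d) ℝ) := inferInstanceAs (TopologicalSpace.PseudoMetrizableSpace (Fin d → Fin d → ℝ)); exact hg_cont.aestronglyMeasurable) ?_
    filter_upwards with s
    rw [Real.norm_of_nonneg (mul_nonneg (stmt11_opN_nonneg Y) (hD_nn s))]
    exact hgnorm s
  refine ⟨hg_int, ?_⟩
  have hK_nn : 0 ≤ K := by
    have h0 := (big (Pi.single ⟨0, hd⟩ 1)).2
    have h1 : (0:ℝ) ≤ ∫ s in Set.Ioi (0:ℝ),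
        ((E s)ᵀ *ᵥ Pi.single ⟨0, hd⟩ 1) ⬝ᵥ ((E s)ᵀ *ᵥ Pi.single ⟨0, hd⟩ 1) :=
      setIntegral_nonneg measurableSet_Ioi fun s _ => stmt11_dot_self_nonneg _
    have h2 : (Pi.single ⟨0, hd⟩ 1 : Fin d → ℝ) ⬝ᵥ Pi.single ⟨0, hd⟩ 1 = 1 := by
      simp [dotProduct, Pi.single_apply]
    rw [h2, mul_one] at h0
    linarith
  apply stmt11_opN_le_of_quad _ _ (mul_nonneg hK_nn (stmt11_opN_nonneg Y))
  intro a b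
  have hrepr : a ⬝ᵥ (∫ s in Set.Ioi (0:ℝ), E s * Y * (E s)ᵀ) *ᵥ b
      = ∫ s in Set.Ioi (0:ℝ), a ⬝ᵥ (E s * Y * (E s)ᵀ) *ᵥ b := by
    have h := ContinuousLinearMap.integral_comp_comm (quadCLM a b) hg_int
    exact h.symm
  rw [hrepr]
  rcases (stmt11_dot_self_nonneg a).eq_or_lt with ha0 | ha0
  · have ha : a = 0 := by rwa [eq_comm, dotProduct_self_eq_zero] at ha0
    rw [ha]
    simp only [zero_dotProduct, integral_zero]
    exact mul_nonneg (mul_nonneg (mul_nonneg hK_nn (stmt11_opN_nonneg Y))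
      (Real.sqrt_nonneg _)) (Real.sqrt_nonneg _)
  rcases (stmt11_dot_self_nonneg b).eq_or_lt with hb0 | hb0
  · have hb : b = 0 := by rwa [eq_comm, dotProduct_self_eq_zero] at hb0
    rw [hb]
    simp only [Matrix.mulVec_zero, dotProduct_zero, integral_zero]
    exact mul_nonneg (mul_nonneg (mul_nonneg hK_nn (stmt11_opN_nonneg Y))
      (Real.sqrt_nonneg _)) (Real.sqrt_nonneg _)
  set na := Real.sqrt (a ⬝ᵥ a) with hna
  set nb := Real.sqrt (b ⬝ᵥ b) with hnb
  have hna0 : 0 < na := Real.sqrt_pos.2 ha0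
  have hnb0 : 0 < nb := Real.sqrt_pos.2 hb0
  have hna2 : na ^ 2 = a ⬝ᵥ a := Real.sq_sqrt (stmt11_dot_self_nonneg a)
  have hnb2 : nb ^ 2 = b ⬝ᵥ b := Real.sq_sqrt (stmt11_dot_self_nonneg b)
  set c := nb / na with hc
  have hc0 : 0 < c := div_pos hnb0 hna0
  have hptw : ∀ s : ℝ, a ⬝ᵥ (E s * Y * (E s)ᵀ) *ᵥ b
      ≤ opN Y * ((c * (((E s)ᵀ *ᵥ a) ⬝ᵥ ((E s)ᵀ *ᵥ a))
          + (((E s)ᵀ *ᵥ b) ⬝ᵥ ((E s)ᵀ *ᵥ b)) / c) / 2) := by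
    intro s
    rw [stmt11_dot_conj]
    have h2 := (le_abs_self _).trans (stmt11_bil_abs Y ((E s)ᵀ *ᵥ a) ((E s)ᵀ *ᵥ b))
    set A := ((E s)ᵀ *ᵥ a) ⬝ᵥ ((E s)ᵀ *ᵥ a) with hA
    set Bv := ((E s)ᵀ *ᵥ b) ⬝ᵥ ((E s)ᵀ *ᵥ b) with hBv
    have hA0 : 0 ≤ A := stmt11_dot_self_nonneg _
    have hB0 : 0 ≤ Bv := stmt11_dot_self_nonneg _
    have h3 : Real.sqrt A * Real.sqrt Bv ≤ (c * A + Bv / c) / 2 := by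
      have key2 : 2 * c * (Real.sqrt A * Real.sqrt Bv) ≤ c ^ 2 * A + Bv := by
        nlinarith [sq_nonneg (c * Real.sqrt A - Real.sqrt Bv), Real.sq_sqrt hA0,
          Real.sq_sqrt hB0]
      have e3 : (c * A + Bv / c) / 2 - Real.sqrt A * Real.sqrt Bv
          = (c ^ 2 * A + Bv - 2 * c * (Real.sqrt A * Real.sqrt Bv)) / (2 * c) := by
        field_simp
      have h4 : 0 ≤ (c * A + Bv / c) / 2 - Real.sqrt A * Real.sqrt Bv := by
        rw [e3]
        apply div_nonneg (by linarith) (by linarith)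
      linarith
    calc ((E s)ᵀ *ᵥ a) ⬝ᵥ Y *ᵥ ((E s)ᵀ *ᵥ b)
        ≤ opN Y * Real.sqrt A * Real.sqrt Bv := h2
      _ = opN Y * (Real.sqrt A * Real.sqrt Bv) := by ring
      _ ≤ opN Y * ((c * A + Bv / c) / 2) :=
          mul_le_mul_of_nonneg_left h3 (stmt11_opN_nonneg Y)
  have hint_lhs : IntegrableOn (fun s : ℝ => a ⬝ᵥ (E s * Y * (E s)ᵀ) *ᵥ b) (Set.Ioi 0) := by
    exact (quadCLM a b).integrable_comp hg_int
  have hint_na : IntegrableOn (fun s : ℝ => ((E s)ᵀ *ᵥ a) ⬝ᵥ ((E s)ᵀ *ᵥ a)) (Set.Ioi 0) :=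
    (big a).1
  have hint_nb : IntegrableOn (fun s : ℝ => ((E s)ᵀ *ᵥ b) ⬝ᵥ ((E s)ᵀ *ᵥ b)) (Set.Ioi 0) :=
    (big b).1
  have hint_rhs : IntegrableOn (fun s : ℝ => opN Y * ((c * (((E s)ᵀ *ᵥ a) ⬝ᵥ ((E s)ᵀ *ᵥ a))
      + (((E s)ᵀ *ᵥ b) ⬝ᵥ ((E s)ᵀ *ᵥ b)) / c) / 2)) (Set.Ioi 0) :=
    (((hint_na.const_mul c).add (hint_nb.div_const c)).div_const 2).const_mul (opN Y)
  have hmono := setIntegral_mono hint_lhs hint_rhs hptw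
  have hval : (∫ s in Set.Ioi (0:ℝ), opN Y * ((c * (((E s)ᵀ *ᵥ a) ⬝ᵥ ((E s)ᵀ *ᵥ a))
      + (((E s)ᵀ *ᵥ b) ⬝ᵥ ((E s)ᵀ *ᵥ b)) / c) / 2))
      = opN Y * ((c * (∫ s in Set.Ioi (0:ℝ), ((E s)ᵀ *ᵥ a) ⬝ᵥ ((E s)ᵀ *ᵥ a))
          + (∫ s in Set.Ioi (0:ℝ), ((E s)ᵀ *ᵥ b) ⬝ᵥ ((E s)ᵀ *ᵥ b)) / c) / 2) := by
    rw [integral_const_mul, integral_div,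
      integral_add (hint_na.const_mul c) (hint_nb.div_const c),
      integral_const_mul, integral_div]
  rw [hval] at hmono
  have t1 : c * (∫ s in Set.Ioi (0:ℝ), ((E s)ᵀ *ᵥ a) ⬝ᵥ ((E s)ᵀ *ᵥ a))
      ≤ c * (K * (a ⬝ᵥ a)) := mul_le_mul_of_nonneg_left (big a).2 hc0.le
  have t2 : (∫ s in Set.Ioi (0:ℝ), ((E s)ᵀ *ᵥ b) ⬝ᵥ ((E s)ᵀ *ᵥ b)) / c
      ≤ K * (b ⬝ᵥ b) / c := (div_le_div_iff_of_pos_right hc0).2 (big b).2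
  have heq : opN Y * ((c * (K * (a ⬝ᵥ a)) + K * (b ⬝ᵥ b) / c) / 2)
      = K * opN Y * na * nb := by
    rw [hc, ← hna2, ← hnb2]
    field_simp
    ring
  calc (∫ s in Set.Ioi (0:ℝ), a ⬝ᵥ (E s * Y * (E s)ᵀ) *ᵥ b)
      ≤ opN Y * ((c * (∫ s in Set.Ioi (0:ℝ), ((E s)ᵀ *ᵥ a) ⬝ᵥ ((E s)ᵀ *ᵥ a))
          + (∫ s in Set.Ioi (0:ℝ), ((E s)ᵀ *ᵥ b) ⬝ᵥ ((E s)ᵀ *ᵥ b)) / c) / 2) := hmono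
    _ ≤ opN Y * ((c * (K * (a ⬝ᵥ a)) + K * (b ⬝ᵥ b) / c) / 2) := by
        refine mul_le_mul_of_nonneg_left ?_ (stmt11_opN_nonneg Y)
        linarith
    _ = K * opN Y * na * nb := heq
end

section
/- Let Λ ∈ ℝ^{2n×2n} be symmetric positive semidefinite with n×n blocks Λ₁₁ (top-left), Λ₁₂ (top-right), Λ₁₂ᵀ, Λ₂₂ (bottom-right), and let Λ₀ ∈ ℝ^{n×n} be symmetric positive semidefinite with Λ₂₂ + Λ₀ ≠ 0. Then λ_min( Λ + blockdiag(0, Λ₀) ) ≥ (1/2) · λ_min(Λ₀) · min{ 1, λ_min(Λ₁₁) / (2 ‖Λ₂₂ + Λ₀‖) }. -/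
open Matrix

section Helpers

variable {k : Type*} [Fintype k] [DecidableEq k]

omit [DecidableEq k] in
lemma quad_nonneg {M : Matrix k k ℝ} (hM : M.PosSemidef) (v : k → ℝ) :
    0 ≤ v ⬝ᵥ M.mulVec v := by simpa using hM.dotProduct_mulVec_nonneg v

omit [DecidableEq k] in
lemma lamMin_le {M : Matrix k k ℝ} (hM : M.PosSemidef) {v : k → ℝ} (hv : v ⬝ᵥ v = 1) :
    lamMin M ≤ v ⬝ᵥ M.mulVec v := by
  apply csInf_le
  · exact ⟨0, fun r ⟨w, _, hw⟩ => hw ▸ quad_nonneg hM w⟩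
  · exact ⟨v, hv, rfl⟩

omit [DecidableEq k] in
lemma lamMin_nonneg {M : Matrix k k ℝ} (hM : M.PosSemidef) : 0 ≤ lamMin M :=
  Real.sInf_nonneg (fun _ ⟨w, _, hw⟩ => hw ▸ quad_nonneg hM w)

omit [DecidableEq k] in
lemma dotProduct_self_nonneg' (v : k → ℝ) : 0 ≤ v ⬝ᵥ v :=
  Finset.sum_nonneg fun i _ => mul_self_nonneg (v i)

omit [DecidableEq k] in
lemma lamMin_mul_le {M : Matrix k k ℝ} (hM : M.PosSemidef) (x : k → ℝ) :
    lamMin M * (x ⬝ᵥ x) ≤ x ⬝ᵥ M.mulVec x := by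
  rcases eq_or_ne x 0 with rfl | hx
  · simp
  · have hd : 0 < x ⬝ᵥ x :=
      lt_of_le_of_ne (dotProduct_self_nonneg' x) (Ne.symm (mt dotProduct_self_eq_zero.mp hx))
    set c := Real.sqrt (x ⬝ᵥ x) with hc
    have hc0 : 0 < c := Real.sqrt_pos.mpr hd
    have hc2 : c * c = x ⬝ᵥ x := Real.mul_self_sqrt hd.le
    have hw : (c⁻¹ • x) ⬝ᵥ (c⁻¹ • x) = 1 := by
      rw [smul_dotProduct, dotProduct_smul, smul_eq_mul, smul_eq_mul, ← mul_assoc]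
      field_simp
      nlinarith
    have h := lamMin_le hM hw
    rw [mulVec_smul, smul_dotProduct, dotProduct_smul, smul_eq_mul, smul_eq_mul, ← mul_assoc] at h
    have : lamMin M * (c * c) ≤ (c * c) * (c⁻¹ * c⁻¹ * (x ⬝ᵥ M.mulVec x)) := by
      nlinarith [h, hc2]
    calc lamMin M * (x ⬝ᵥ x) = lamMin M * (c * c) := by rw [hc2]
      _ ≤ (c * c) * (c⁻¹ * c⁻¹ * (x ⬝ᵥ M.mulVec x)) := this
      _ = x ⬝ᵥ M.mulVec x := by field_simp

omit [DecidableEq k] in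
lemma inner_eq_dot (a b : k → ℝ) :
    (inner ℝ ((WithLp.equiv 2 (k → ℝ)).symm a) ((WithLp.equiv 2 (k → ℝ)).symm b) : ℝ) = a ⬝ᵥ b := by
  simp [PiLp.inner_apply, RCLike.inner_apply, dotProduct, mul_comm]

lemma quad_le_opN (M : Matrix k k ℝ) (y : k → ℝ) :
    y ⬝ᵥ M.mulVec y ≤ opN M * (y ⬝ᵥ y) := by
  set Y : EuclideanSpace ℝ k := (WithLp.equiv 2 (k → ℝ)).symm y with hY
  set f := LinearMap.toContinuousLinearMap (Matrix.toEuclideanLin M) with hf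
  have hfY : f Y = (WithLp.equiv 2 (k → ℝ)).symm (M.mulVec y) := by
    simp [hf, hY, Matrix.toEuclideanLin_apply]
  have h1 : y ⬝ᵥ M.mulVec y = (inner ℝ Y (f Y) : ℝ) := by rw [hfY, inner_eq_dot]
  have h2 : (inner ℝ Y (f Y) : ℝ) ≤ ‖Y‖ * ‖f Y‖ := real_inner_le_norm Y (f Y)
  have h3 : ‖f Y‖ ≤ opN M * ‖Y‖ := f.le_opNorm Y
  have h4 : ‖Y‖ * ‖Y‖ = y ⬝ᵥ y := by
    rw [← real_inner_self_eq_norm_mul_norm, hY, inner_eq_dot]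
  calc y ⬝ᵥ M.mulVec y = (inner ℝ Y (f Y) : ℝ) := h1
    _ ≤ ‖Y‖ * ‖f Y‖ := h2
    _ ≤ ‖Y‖ * (opN M * ‖Y‖) := mul_le_mul_of_nonneg_left h3 (norm_nonneg Y)
    _ = opN M * (‖Y‖ * ‖Y‖) := by ring
    _ = opN M * (y ⬝ᵥ y) := by rw [h4]

lemma opN_pos {M : Matrix k k ℝ} (hM : M ≠ 0) : 0 < opN M := by
  rw [opN, norm_pos_iff]
  intro h
  apply hM
  have h0 : Matrix.toEuclideanLin M = 0 := by
    apply LinearMap.ext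
    intro v
    have := congrFun (congrArg (DFunLike.coe) h) v
    simpa using this
  exact (Matrix.toEuclideanLin (𝕜 := ℝ)).map_eq_zero_iff.mp h0

omit [DecidableEq k] in
lemma quad_blocks (P : Matrix (k ⊕ k) (k ⊕ k) ℝ) (x y : k → ℝ) :
    Sum.elim x y ⬝ᵥ P.mulVec (Sum.elim x y) =
      x ⬝ᵥ P.toBlocks₁₁.mulVec x + x ⬝ᵥ P.toBlocks₁₂.mulVec y
      + y ⬝ᵥ P.toBlocks₂₁.mulVec x + y ⬝ᵥ P.toBlocks₂₂.mulVec y := by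
  conv_lhs => rw [← fromBlocks_toBlocks P]
  rw [fromBlocks_mulVec, sumElim_dotProduct_sumElim, dotProduct_add, dotProduct_add]
  simp only [Sum.elim_comp_inl, Sum.elim_comp_inr]
  ring

omit [DecidableEq k] in
lemma sym_cross {Λ : Matrix (k ⊕ k) (k ⊕ k) ℝ} (h : Λ.IsHermitian) (x y : k → ℝ) :
    y ⬝ᵥ Λ.toBlocks₂₁.mulVec x = x ⬝ᵥ Λ.toBlocks₁₂.mulVec y := by
  have hsym : Λ.toBlocks₂₁ = Λ.toBlocks₁₂ᵀ := by
    ext i j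
    have h2 := congrFun (congrFun h.symm (Sum.inr i)) (Sum.inl j)
    simpa [conjTranspose_apply, toBlocks₂₁, toBlocks₁₂, transpose_apply] using h2
  rw [hsym, dotProduct_mulVec, vecMul_transpose, dotProduct_comm]

lemma key_real {a c s u α γ δ q : ℝ} (hs : 0 < s) (ha : 0 ≤ a) (hc0 : 0 ≤ c) (hcs : c ≤ s)
    (hα0 : 0 ≤ α) (hγ0 : 0 ≤ γ)
    (hα : a * (1 - u) ≤ α) (hγ : γ ≤ s * u) (hδ : c * u ≤ δ)
    (hq1 : δ ≤ q)
    (hq2 : α - 2 * Real.sqrt α * Real.sqrt γ + γ + δ ≤ q) :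
    1 / 2 * c * min 1 (a / (2 * s)) ≤ q := by
  set t := min 1 (a / (2 * s)) with htdef
  have ht0 : 0 ≤ t := le_min (by norm_num) (by positivity)
  have ht1 : t ≤ 1 := min_le_left _ _
  have hts : s * t ≤ a / 2 := by
    have h := min_le_right 1 (a / (2 * s))
    calc s * t ≤ s * (a / (2 * s)) := mul_le_mul_of_nonneg_left h (le_of_lt hs)
      _ = a / 2 := by field_simp
  rcases le_or_gt (t / 2) u with h | h
  · calc 1 / 2 * c * t = c * (t / 2) := by ring
      _ ≤ c * u := mul_le_mul_of_nonneg_left h hc0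
      _ ≤ δ := hδ
      _ ≤ q := hq1
  · set A := Real.sqrt α with hAdef
    set G := Real.sqrt γ with hGdef
    have hA2 : A ^ 2 = α := Real.sq_sqrt hα0
    have hG2 : G ^ 2 = γ := Real.sq_sqrt hγ0
    have hA0 : 0 ≤ A := Real.sqrt_nonneg _
    have hG0 : 0 ≤ G := Real.sqrt_nonneg _
    have h1 : a / 2 ≤ A ^ 2 := by nlinarith
    have h2 : G ^ 2 ≤ s * u := by nlinarith
    nlinarith [sq_nonneg (A - 2 * G),
      mul_nonneg (sub_nonneg.2 hcs) (by linarith : (0:ℝ) ≤ t / 2 - u)]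

end Helpers

/-- Lower bound on the smallest eigenvalue of a PSD block matrix
perturbed by a PSD matrix in the (2,2)-block. -/
theorem stmt_15 {n : ℕ} (Λ : Matrix (Fin n ⊕ Fin n) (Fin n ⊕ Fin n) ℝ)
    (hΛ : Λ.PosSemidef)
    (Λ₀ : Matrix (Fin n) (Fin n) ℝ) (hΛ₀ : Λ₀.PosSemidef)
    (hne : Λ.toBlocks₂₂ + Λ₀ ≠ 0) :
    (1 / 2) * lamMin Λ₀ *
        min 1 (lamMin Λ.toBlocks₁₁ / (2 * opN (Λ.toBlocks₂₂ + Λ₀))) ≤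
      lamMin (Λ + Matrix.fromBlocks 0 0 0 Λ₀) := by
  cases n with
  | zero => exact absurd (Subsingleton.elim _ _) hne
  | succ m =>
  have hA : Λ.toBlocks₁₁.PosSemidef := hΛ.submatrix Sum.inl
  have hC : Λ.toBlocks₂₂.PosSemidef := hΛ.submatrix Sum.inr
  have hs : 0 < opN (Λ.toBlocks₂₂ + Λ₀) := opN_pos hne
  have ha : 0 ≤ lamMin Λ.toBlocks₁₁ := lamMin_nonneg hA
  have hc0 : 0 ≤ lamMin Λ₀ := lamMin_nonneg hΛ₀
  have hcs : lamMin Λ₀ ≤ opN (Λ.toBlocks₂₂ + Λ₀) := by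
    set e : Fin (m + 1) → ℝ := Pi.single 0 1 with hedef
    have he : e ⬝ᵥ e = 1 := by simp [hedef]
    have h1 : lamMin Λ₀ ≤ e ⬝ᵥ Λ₀.mulVec e := lamMin_le hΛ₀ he
    have h2 : e ⬝ᵥ Λ₀.mulVec e ≤ e ⬝ᵥ (Λ.toBlocks₂₂ + Λ₀).mulVec e := by
      rw [add_mulVec, dotProduct_add]
      linarith [quad_nonneg hC e]
    have h3 := quad_le_opN (Λ.toBlocks₂₂ + Λ₀) e
    rw [he, mul_one] at h3
    linarith
  apply le_csInf
  · refine ⟨_, Sum.elim (Pi.single 0 1) (0 : Fin (m + 1) → ℝ), ?_, rfl⟩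
    rw [sumElim_dotProduct_sumElim]
    simp
  · rintro r ⟨v, hv, rfl⟩
    set x : Fin (m + 1) → ℝ := fun i => v (Sum.inl i) with hxdef
    set y : Fin (m + 1) → ℝ := fun i => v (Sum.inr i) with hydef
    have hv' : v = Sum.elim x y := by funext i; cases i <;> rfl
    set α := x ⬝ᵥ Λ.toBlocks₁₁.mulVec x with hαdef
    set β := x ⬝ᵥ Λ.toBlocks₁₂.mulVec y with hβdef
    set γ := y ⬝ᵥ Λ.toBlocks₂₂.mulVec y with hγdef
    set δ := y ⬝ᵥ Λ₀.mulVec y with hδdef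
    set u := y ⬝ᵥ y with hudef
    have hxx : x ⬝ᵥ x = 1 - u := by
      have h1 : Sum.elim x y ⬝ᵥ Sum.elim x y = x ⬝ᵥ x + u := sumElim_dotProduct_sumElim x x y y
      rw [← hv', hv] at h1
      linarith
    have hα0 : 0 ≤ α := quad_nonneg hA x
    have hγ0 : 0 ≤ γ := quad_nonneg hC y
    have hα : lamMin Λ.toBlocks₁₁ * (1 - u) ≤ α := by
      rw [← hxx]; exact lamMin_mul_le hA x
    have hδ : lamMin Λ₀ * u ≤ δ := lamMin_mul_le hΛ₀ y
    have hγs : γ ≤ opN (Λ.toBlocks₂₂ + Λ₀) * u := by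
      have h3 := quad_le_opN (Λ.toBlocks₂₂ + Λ₀) y
      rw [add_mulVec, dotProduct_add] at h3
      linarith [quad_nonneg hΛ₀ y]
    have hqsplit : v ⬝ᵥ (Λ + Matrix.fromBlocks 0 0 0 Λ₀).mulVec v = v ⬝ᵥ Λ.mulVec v + δ := by
      rw [add_mulVec, dotProduct_add]
      congr 1
      rw [hv', quad_blocks]
      simp [hδdef]
    have hΛq : v ⬝ᵥ Λ.mulVec v = α + 2 * β + γ := by
      rw [hv', quad_blocks, sym_cross hΛ.1]
      ring
    have hcs2 : β ^ 2 ≤ α * γ := by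
      have hquad : ∀ rr : ℝ, 0 ≤ α * (rr * rr) + (2 * β) * rr + γ := by
        intro rr
        have h0 := quad_nonneg hΛ (Sum.elim (rr • x) y)
        rw [quad_blocks, sym_cross hΛ.1] at h0
        simp only [smul_dotProduct, mulVec_smul, dotProduct_smul, smul_eq_mul] at h0
        nlinarith [h0]
      have hd := discrim_le_zero hquad
      rw [discrim] at hd
      nlinarith
    have hβ : -(Real.sqrt α * Real.sqrt γ) ≤ β := by
      have h1 : |β| ≤ Real.sqrt α * Real.sqrt γ := by
        rw [← Real.sqrt_mul hα0, ← Real.sqrt_sq_eq_abs]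
        exact Real.sqrt_le_sqrt hcs2
      linarith [neg_abs_le β]
    have hq1 : δ ≤ v ⬝ᵥ (Λ + Matrix.fromBlocks 0 0 0 Λ₀).mulVec v := by
      rw [hqsplit]
      linarith [quad_nonneg hΛ v]
    have hq2 : α - 2 * Real.sqrt α * Real.sqrt γ + γ + δ ≤
        v ⬝ᵥ (Λ + Matrix.fromBlocks 0 0 0 Λ₀).mulVec v := by
      rw [hqsplit, hΛq]
      linarith
    exact key_real hs ha hc0 hcs hα0 hγ0 hα hγs hδ hq1 hq2
end
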